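/- arXiv:1704.03650 — 2 statements merged into one kernel-verified Lean document; each statement's English description precedes it below -/
import Mathlib

section
/- Suppose k : ℝ → ℝ is a C^1 diffeomorphism onto ℝ and there exist constants 0 < c ≤ C and a function σ with 0 < c ≤ k'(x)σ(x) ≤ C for all x, where σ has linear growth: σ(x) ≤ K(1 + |x|) for some K > 0. Then there exist constants C₂, C₃ > 0 such that |k^{-1}(x)| ≤ C₃ e^{C₂|x|} for all x ∈ ℝ. -/
/-- If `k : ℝ → ℝ` is a `C¹` diffeomorphism onto `ℝ` with `0 < c ≤ k'σ ≤ C` for a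
function `σ > 0` of linear growth `σ(x) ≤ K(1+|x|)`, then there exist constants
`C₂, C₃ > 0` such that `|k⁻¹(x)| ≤ C₃ e^{C₂|x|}` for all `x`. -/
theorem stmt8 (k σ : ℝ → ℝ) (hk : Function.Bijective k) (hk1 : ContDiff ℝ 1 k)
    (c C K : ℝ) (hc : 0 < c) (hcC : c ≤ C) (hK : 0 < K)
    (hσpos : ∀ x, 0 < σ x)
    (hlow : ∀ x, c ≤ deriv k x * σ x) (hhigh : ∀ x, deriv k x * σ x ≤ C)
    (hgrowth : ∀ x, σ x ≤ K * (1 + |x|)) :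
    ∃ C₂ C₃ : ℝ, 0 < C₂ ∧ 0 < C₃ ∧
      ∀ x : ℝ, |Function.invFun k x| ≤ C₃ * Real.exp (C₂ * |x|) := by
  have hdiff : Differentiable ℝ k := hk1.differentiable one_ne_zero
  -- derivative lower bound
  have hder : ∀ x : ℝ, c / (K * (1 + |x|)) ≤ deriv k x := by
    intro x
    have h1 : 0 < K * (1 + |x|) := by positivity
    have h2 : c / σ x ≤ deriv k x := (div_le_iff₀ (hσpos x)).2 (hlow x)
    have h3 : c / (K * (1 + |x|)) ≤ c / σ x :=
      div_le_div_of_nonneg_left hc.le (hσpos x) (hgrowth x)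
    linarith
  -- k(x) - k(0) ≥ (c/K) log(1+x) for x ≥ 0
  have hpos : ∀ x : ℝ, 0 ≤ x → c / K * Real.log (1 + x) ≤ k x - k 0 := by
    intro x hx
    set f : ℝ → ℝ := fun x => k x - c / K * Real.log (1 + x) with hf
    have hd : ∀ y ∈ Set.Ioi (0:ℝ), HasDerivAt f (deriv k y - c / K * (1 / (1 + y))) y := by
      intro y hy
      have hy' : (0:ℝ) < y := hy
      have h1y : (0:ℝ) < 1 + y := by linarith
      have hlog : HasDerivAt (fun z : ℝ => Real.log (1 + z)) (1 / (1 + y)) y := by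
        have := ((hasDerivAt_id y).const_add 1).log h1y.ne'
        simpa using this
      exact (hdiff y).hasDerivAt.sub (hlog.const_mul (c / K))
    have hmono : MonotoneOn f (Set.Ici 0) := by
      apply monotoneOn_of_deriv_nonneg (convex_Ici 0)
      · apply hk1.continuous.continuousOn.sub
        apply ContinuousOn.mul continuousOn_const
        apply ContinuousOn.log (continuous_const.add continuous_id).continuousOn
        intro y hy
        have : (0:ℝ) ≤ y := hy
        intro h; simp at h; linarith
      · intro y hy
        rw [interior_Ici] at hy
        exact (hd y hy).differentiableAt.differentiableWithinAt
      · intro y hy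
        rw [interior_Ici] at hy
        have hy' : (0:ℝ) < y := hy
        have h1y : (0:ℝ) < 1 + y := by linarith
        rw [(hd y hy).deriv]
        have := hder y
        rw [abs_of_pos hy'] at this
        have heq : c / K * (1 / (1 + y)) = c / (K * (1 + y)) := by
          field_simp
        linarith [heq ▸ this]
    have := hmono (Set.self_mem_Ici) (Set.mem_Ici.2 hx) hx
    simp only [hf] at this
    simp only [add_zero, Real.log_one, mul_zero, sub_zero] at this
    linarith
  -- k(0) - k(x) ≥ (c/K) log(1-x) for x ≤ 0
  have hneg : ∀ x : ℝ, x ≤ 0 → c / K * Real.log (1 - x) ≤ k 0 - k x := by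
    intro x hx
    set f : ℝ → ℝ := fun x => k x + c / K * Real.log (1 - x) with hf
    have hd : ∀ y ∈ Set.Iio (0:ℝ), HasDerivAt f (deriv k y + c / K * (-1 / (1 - y))) y := by
      intro y hy
      have hy' : y < (0:ℝ) := hy
      have h1y : (0:ℝ) < 1 - y := by linarith
      have hlog : HasDerivAt (fun z : ℝ => Real.log (1 - z)) (-1 / (1 - y)) y := by
        have h0 : HasDerivAt (fun z : ℝ => 1 - z) (-1 : ℝ) y := by
          simpa using (hasDerivAt_id y).const_sub 1
        exact h0.log h1y.ne'
      exact (hdiff y).hasDerivAt.add (hlog.const_mul (c / K))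
    have hmono : MonotoneOn f (Set.Iic 0) := by
      apply monotoneOn_of_deriv_nonneg (convex_Iic 0)
      · apply hk1.continuous.continuousOn.add
        apply ContinuousOn.mul continuousOn_const
        apply ContinuousOn.log (continuous_const.sub continuous_id).continuousOn
        intro y hy
        have : y ≤ (0:ℝ) := hy
        intro h; simp at h; linarith
      · intro y hy
        rw [interior_Iic] at hy
        exact (hd y hy).differentiableAt.differentiableWithinAt
      · intro y hy
        rw [interior_Iic] at hy
        have hy' : y < (0:ℝ) := hy
        have h1y : (0:ℝ) < 1 - y := by linarith
        rw [(hd y hy).deriv]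
        have := hder y
        rw [abs_of_neg hy'] at this
        have heq : c / K * (1 / (1 - y)) = c / (K * (1 - y)) := by
          field_simp
        have : c / K * (1 / (1 - y)) ≤ deriv k y := by
          rw [heq]; simpa [sub_eq_add_neg] using this
        have hrw : c / K * (-1 / (1 - y)) = -(c / K * (1 / (1 - y))) := by ring
        rw [hrw]; linarith
    have := hmono (Set.mem_Iic.2 hx) Set.self_mem_Iic hx
    simp only [hf] at this
    simp only [sub_zero, Real.log_one, mul_zero, add_zero] at this
    linarith
  -- combine
  have hkey : ∀ x : ℝ, c / K * Real.log (1 + |x|) ≤ |k x - k 0| := by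
    intro x
    rcases le_or_gt 0 x with hx | hx
    · rw [abs_of_nonneg hx]
      calc c / K * Real.log (1 + x) ≤ k x - k 0 := hpos x hx
        _ ≤ |k x - k 0| := le_abs_self _
    · rw [abs_of_neg hx]
      calc c / K * Real.log (1 - x) ≤ k 0 - k x := hneg x hx.le
        _ ≤ |k x - k 0| := by rw [abs_sub_comm]; exact le_abs_self _
    -- note: 1 + |x| = 1 - x when x < 0
  refine ⟨K / c, Real.exp (K / c * |k 0|), by positivity, Real.exp_pos _, fun y => ?_⟩
  set x := Function.invFun k y with hxdef
  have hky : k x = y := Function.rightInverse_invFun hk.surjective y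
  have h1x : (0:ℝ) < 1 + |x| := by positivity
  have hlog : Real.log (1 + |x|) ≤ K / c * (|y| + |k 0|) := by
    have h1 := hkey x
    rw [hky] at h1
    have h2 : |y - k 0| ≤ |y| + |k 0| := abs_sub y (k 0)
    have h3 : c / K * Real.log (1 + |x|) ≤ |y| + |k 0| := by linarith
    have hcK : 0 < c / K := by positivity
    calc Real.log (1 + |x|) = K / c * (c / K * Real.log (1 + |x|)) := by
          field_simp
      _ ≤ K / c * (|y| + |k 0|) := by
          apply mul_le_mul_of_nonneg_left h3 (by positivity)
  calc |x| ≤ 1 + |x| := by linarith [abs_nonneg x]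
    _ = Real.exp (Real.log (1 + |x|)) := (Real.exp_log h1x).symm
    _ ≤ Real.exp (K / c * (|y| + |k 0|)) := Real.exp_le_exp.2 hlog
    _ = Real.exp (K / c * |k 0|) * Real.exp (K / c * |y|) := by
        rw [← Real.exp_add]; ring_nf
end

section
/- Let E be a Polish space, (P^{s,x}) a canonical Markov class on D([0,T],E) whose transition function is measurable in time, V : [0,T] → ℝ continuous non-decreasing, and f ∈ B([0,T] × E, ℝ) such that E^{s,x}[∫_s^T |f(r,X_r)| dV_r] < ∞ for every (s,x). Then the map (s,x) ↦ E^{s,x}[∫_s^T f(r,X_r) dV_r] is jointly Borel on [0,T] × E. -/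
open Set MeasureTheory Filter Topology

/-- For a canonical Markov class `(P^{s,x})` whose transition function is measurable
in time — encoded through the property that `(s,x) ↦ E^{s,x}[Z]` is Borel for every
bounded Borel `Z` — and a Borel `f` with
`E^{s,x}[∫ₛᵀ |f(r,X_r)| dV_r] < ∞` for every `(s,x)`, the map
`(s,x) ↦ E^{s,x}[∫ₛᵀ f(r,X_r) dV_r]` is jointly Borel. -/
theorem stmt15 {E Ω : Type*} [MeasurableSpace E] [MeasurableSpace Ω]
    (T : ℝ) (hT : 0 < T)
    (X : ℝ → Ω → E) (hX : Measurable (Function.uncurry X))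
    (P : ℝ → E → Measure Ω)
    (hprob : ∀ s x, IsProbabilityMeasure (P s x))
    (hBorel : ∀ Z : Ω → ℝ, Measurable Z → (∃ K, ∀ ω, |Z ω| ≤ K) →
      Measurable fun q : ℝ × E => ∫ ω, Z ω ∂(P q.1 q.2))
    (V : StieltjesFunction ℝ) (hV : Continuous V)
    (f : ℝ → E → ℝ) (hf : Measurable (Function.uncurry f))
    (hint : ∀ s x, (∫⁻ ω, ∫⁻ r in Icc s T,
        ENNReal.ofReal |f r (X r ω)| ∂V.measure ∂(P s x)) < ⊤) :
    Measurable fun q : ℝ × E =>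
      ∫ ω, (∫ r in Icc q.1 T, f r (X r ω) ∂V.measure) ∂(P q.1 q.2) := by
  -- V is continuous, so its left limits agree with its values
  have hVl : ∀ t : ℝ, Function.leftLim V t = V t := fun t =>
    leftLim_eq_of_tendsto
      ((hV.tendsto t).mono_left nhdsWithin_le_nhds)
  have hmIcc : ∀ a b : ℝ, V.measure (Icc a b) = ENNReal.ofReal (V b - V a) := by
    intro a b; rw [V.measure_Icc, hVl]
  have hfinIcc : ∀ a b : ℝ, V.measure (Icc a b) ≠ ⊤ := by
    intro a b; rw [hmIcc]; exact ENNReal.ofReal_ne_top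
  -- truncations
  set g : ℕ → ℝ → E → ℝ := fun n r y => max (-(n : ℝ)) (min (f r y) n) with hgdef
  have hfX : Measurable fun p : ℝ × Ω => f p.1 (X p.1 p.2) :=
    hf.comp (measurable_fst.prodMk hX)
  have hgX : ∀ n : ℕ, Measurable fun p : ℝ × Ω => g n p.1 (X p.1 p.2) := fun n =>
    measurable_const.max (hfX.min measurable_const)
  have hgbd : ∀ (n : ℕ) (r : ℝ) (y : E), |g n r y| ≤ (n : ℝ) := by
    intro n r y
    rw [abs_le]
    exact ⟨le_max_left _ _, max_le (neg_le_self n.cast_nonneg) (min_le_right _ _)⟩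
  have hgabs : ∀ (n : ℕ) (r : ℝ) (y : E), |g n r y| ≤ |f r y| := by
    intro n r y
    rw [abs_le]
    constructor
    · rcases le_total (f r y) (n : ℝ) with h | h
      · rw [hgdef]; simp only [min_eq_left h]
        exact le_max_of_le_right (neg_abs_le _)
      · rw [hgdef]; simp only [min_eq_right h]
        exact le_max_of_le_right (le_trans (neg_nonpos.2 (abs_nonneg _)) n.cast_nonneg)
    · exact max_le (le_trans (neg_nonpos.2 n.cast_nonneg) (abs_nonneg _))
        ((min_le_left _ _).trans (le_abs_self _))
  have hgtend : ∀ (r : ℝ) (y : E), Tendsto (fun n : ℕ => g n r y) atTop (𝓝 (f r y)) := by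
    intro r y
    obtain ⟨N, hN⟩ := exists_nat_ge |f r y|
    apply tendsto_const_nhds.congr'
    filter_upwards [eventually_ge_atTop N] with n hn
    have h1 : |f r y| ≤ (n : ℝ) := hN.trans (Nat.cast_le.2 hn)
    obtain ⟨h2, h3⟩ := abs_le.1 h1
    rw [hgdef]
    simp only [min_eq_left h3, max_eq_right h2]
  -- the truncated inner integrals
  set Z : ℕ → ℝ → Ω → ℝ := fun n t ω => ∫ r in Icc t T, g n r (X r ω) ∂V.measure with hZdef
  have hgmeas_ω : ∀ (n : ℕ) (ω : Ω), Measurable fun r => g n r (X r ω) := fun n ω =>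
    (hgX n).comp (measurable_id.prodMk measurable_const)
  have hZint : ∀ (n : ℕ) (t : ℝ) (ω : Ω),
      IntegrableOn (fun r => g n r (X r ω)) (Icc t T) V.measure := by
    intro n t ω
    refine Measure.integrableOn_of_bounded (hfinIcc t T)
      (hgmeas_ω n ω).aestronglyMeasurable (M := (n : ℝ)) ?_
    exact ae_of_all _ fun r => by rw [Real.norm_eq_abs]; exact hgbd n r _
  have hZmeas : ∀ (n : ℕ) (t : ℝ), Measurable (Z n t) := by
    intro n t
    have h1 : StronglyMeasurable (Function.uncurry fun ω r => g n r (X r ω)) :=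
      ((hgX n).comp measurable_swap).stronglyMeasurable
    exact h1.integral_prod_right.measurable
  have hZbd : ∀ (n : ℕ) (t : ℝ) (ω : Ω),
      |Z n t ω| ≤ (n : ℝ) * (V.measure (Icc t T)).toReal := by
    intro n t ω
    rw [← Real.norm_eq_abs]
    refine norm_setIntegral_le_of_norm_le_const_ae (lt_top_iff_ne_top.2 (hfinIcc t T)) ?_
    exact ae_of_all _ fun r => by rw [Real.norm_eq_abs]; exact hgbd n r _
  -- the key Lipschitz-type estimate in t
  have hkey : ∀ (n : ℕ) (ω : Ω) ⦃t t' : ℝ⦄, t ≤ t' →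
      |Z n t ω - Z n t' ω| ≤ (n : ℝ) * (V t' - V t) := by
    intro n ω t t' htt
    have hsub : Icc t' T ⊆ Icc t T := Icc_subset_Icc_left htt
    have hdiff := integral_diff measurableSet_Icc (hZint n t ω) hsub
    rw [hZdef]
    dsimp only
    rw [← hdiff, ← Real.norm_eq_abs]
    have hd : Icc t T \ Icc t' T ⊆ Icc t t' := by
      rintro r ⟨⟨h1, h2⟩, h3⟩
      refine ⟨h1, ?_⟩
      by_contra h4
      exact h3 ⟨le_of_not_ge h4, h2⟩
    have hmfin : V.measure (Icc t T \ Icc t' T) < ⊤ :=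
      lt_of_le_of_lt (measure_mono diff_subset) (lt_top_iff_ne_top.2 (hfinIcc t T))
    have h5 : ‖∫ r in Icc t T \ Icc t' T, g n r (X r ω) ∂V.measure‖ ≤
        (n : ℝ) * (V.measure (Icc t T \ Icc t' T)).toReal := by
      refine norm_setIntegral_le_of_norm_le_const_ae hmfin ?_
      exact ae_of_all _ fun r => by rw [Real.norm_eq_abs]; exact hgbd n r _
    refine h5.trans ?_
    have h6 : (V.measure (Icc t T \ Icc t' T)).toReal ≤ (V.measure (Icc t t')).toReal :=
      ENNReal.toReal_mono (hfinIcc t t') (measure_mono hd)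
    have h7 : (V.measure (Icc t t')).toReal = V t' - V t := by
      rw [hmIcc, ENNReal.toReal_ofReal (sub_nonneg.2 (V.mono htt))]
    nlinarith [h6, h7, n.cast_nonneg (α := ℝ)]
  -- the truncated maps
  set F : ℕ → ℝ → ℝ × E → ℝ := fun n t q => ∫ ω, Z n t ω ∂(P q.1 q.2) with hFdef
  have hZintP : ∀ (n : ℕ) (t : ℝ) (q : ℝ × E), Integrable (Z n t) (P q.1 q.2) := by
    intro n t q
    haveI := hprob q.1 q.2
    refine Integrable.mono' (integrable_const ((n : ℝ) * (V.measure (Icc t T)).toReal))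
      (hZmeas n t).aestronglyMeasurable ?_
    exact ae_of_all _ fun ω => by rw [Real.norm_eq_abs]; exact hZbd n t ω
  have hFkey : ∀ (n : ℕ) (q : ℝ × E) ⦃t t' : ℝ⦄, t ≤ t' →
      |F n t q - F n t' q| ≤ (n : ℝ) * (V t' - V t) := by
    intro n q t t' htt
    haveI := hprob q.1 q.2
    rw [hFdef]
    dsimp only
    rw [← integral_sub (hZintP n t q) (hZintP n t' q), ← Real.norm_eq_abs]
    have := norm_integral_le_of_norm_le_const (μ := P q.1 q.2)
      (f := fun ω => Z n t ω - Z n t' ω) (C := (n : ℝ) * (V t' - V t))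
      (ae_of_all _ fun ω => by rw [Real.norm_eq_abs]; exact hkey n ω htt)
    simpa [measure_univ] using this
  have hFcont : ∀ (n : ℕ) (q : ℝ × E), Continuous fun t => F n t q := by
    intro n q
    rw [continuous_iff_continuousAt]
    intro t₀
    rw [ContinuousAt, tendsto_iff_dist_tendsto_zero]
    have hb : ∀ t, dist (F n t q) (F n t₀ q) ≤ (n : ℝ) * |V t - V t₀| := by
      intro t
      rw [Real.dist_eq]
      rcases le_total t t₀ with h | h
      · have := hFkey n q h
        rw [abs_of_nonpos (sub_nonpos.2 (V.mono h))]
        linarith [abs_sub_comm (F n t q) (F n t₀ q) ▸ this, (abs_sub_comm (F n t₀ q) (F n t q))]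
      · have := hFkey n q h
        rw [abs_of_nonneg (sub_nonneg.2 (V.mono h))]
        rw [abs_sub_comm]
        linarith
    refine squeeze_zero (fun t => dist_nonneg) hb ?_
    have : Tendsto (fun t => (n : ℝ) * |V t - V t₀|) (𝓝 t₀) (𝓝 ((n : ℝ) * |V t₀ - V t₀|)) :=
      tendsto_const_nhds.mul (((hV.tendsto t₀).sub tendsto_const_nhds).abs)
    simpa using this
  have hFmeas : ∀ (n : ℕ) (t : ℝ), Measurable (F n t) := fun n t =>
    hBorel (Z n t) (hZmeas n t) ⟨(n : ℝ) * (V.measure (Icc t T)).toReal, hZbd n t⟩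
  have hFj : ∀ n : ℕ, Measurable (Function.uncurry (F n)) := fun n =>
    measurable_uncurry_of_continuous_of_measurable (hFcont n) (hFmeas n)
  have hGn : ∀ n : ℕ, Measurable fun q : ℝ × E => F n q.1 q := fun n =>
    (hFj n).comp (measurable_fst.prodMk measurable_id)
  -- pass to the limit
  refine measurable_of_tendsto_metrizable' atTop hGn (tendsto_pi_nhds.2 ?_)
  rintro ⟨s, x⟩
  dsimp only
  haveI := hprob s x
  -- measurability of the total-variation inner integral
  have hA : Measurable fun ω => ∫⁻ r in Icc s T, ENNReal.ofReal |f r (X r ω)| ∂V.measure := by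
    apply Measurable.lintegral_prod_right
    exact ENNReal.measurable_ofReal.comp ((hfX.comp measurable_swap).abs)
  have hae : ∀ᵐ ω ∂(P s x),
      (∫⁻ r in Icc s T, ENNReal.ofReal |f r (X r ω)| ∂V.measure) < ⊤ :=
    ae_lt_top hA (hint s x).ne
  set B : Ω → ℝ := fun ω => (∫⁻ r in Icc s T, ENNReal.ofReal |f r (X r ω)| ∂V.measure).toReal
    with hBdef
  have hBint : Integrable B (P s x) := by
    refine ⟨hA.ennreal_toReal.aestronglyMeasurable, ?_⟩
    rw [hasFiniteIntegral_iff_norm]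
    refine lt_of_le_of_lt ?_ (hint s x)
    refine lintegral_mono fun ω => ?_
    rw [Real.norm_eq_abs, abs_of_nonneg ENNReal.toReal_nonneg]
    exact ENNReal.ofReal_toReal_le
  -- pointwise facts on the good set
  have hωkey : ∀ ω, (∫⁻ r in Icc s T, ENNReal.ofReal |f r (X r ω)| ∂V.measure) < ⊤ →
      IntegrableOn (fun r => f r (X r ω)) (Icc s T) V.measure ∧
      (∫ r in Icc s T, |f r (X r ω)| ∂V.measure) = B ω := by
    intro ω hω
    have hm : Measurable fun r => f r (X r ω) :=
      hfX.comp (measurable_id.prodMk measurable_const)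
    have hI : IntegrableOn (fun r => f r (X r ω)) (Icc s T) V.measure := by
      refine ⟨hm.aestronglyMeasurable, ?_⟩
      rw [hasFiniteIntegral_iff_norm]
      simpa only [Real.norm_eq_abs] using hω
    refine ⟨hI, ?_⟩
    rw [hBdef]
    dsimp only
    rw [integral_eq_lintegral_of_nonneg_ae (ae_of_all _ fun r => abs_nonneg _)
      hm.abs.aestronglyMeasurable]
  have hbound : ∀ n : ℕ, ∀ᵐ ω ∂(P s x), ‖Z n s ω‖ ≤ B ω := by
    intro n
    filter_upwards [hae] with ω hω
    obtain ⟨hI, hB⟩ := hωkey ω hω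
    rw [Real.norm_eq_abs, ← hB]
    calc |Z n s ω| ≤ ∫ r in Icc s T, |g n r (X r ω)| ∂V.measure := by
          rw [← Real.norm_eq_abs]
          simpa [Real.norm_eq_abs] using norm_integral_le_integral_norm
            (μ := V.measure.restrict (Icc s T)) (fun r => g n r (X r ω))
      _ ≤ ∫ r in Icc s T, |f r (X r ω)| ∂V.measure :=
          integral_mono (hZint n s ω).abs hI.abs fun r => hgabs n r _
  have hlim : ∀ᵐ ω ∂(P s x), Tendsto (fun n => Z n s ω) atTop
      (𝓝 (∫ r in Icc s T, f r (X r ω) ∂V.measure)) := by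
    filter_upwards [hae] with ω hω
    obtain ⟨hI, _⟩ := hωkey ω hω
    refine tendsto_integral_of_dominated_convergence (fun r => |f r (X r ω)|)
      (fun n => (hgmeas_ω n ω).aestronglyMeasurable) hI.abs ?_ ?_
    · intro n
      exact ae_of_all _ fun r => by rw [Real.norm_eq_abs]; exact hgabs n r _
    · exact ae_of_all _ fun r => hgtend r _
  exact tendsto_integral_of_dominated_convergence B
    (fun n => (hZmeas n s).aestronglyMeasurable) hBint hbound hlim
end
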